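/- arXiv:2210.13315 — 3 statements merged into one kernel-verified Lean document; each statement's English description precedes it below -/
import Mathlib

section
/- Let 0 < ε ≤ 1/N, N ≥ 2 even, α > 0, σ > 0, and define the Bakhvalov-type mesh transition point τ = (σε/α)·(−ln(1−2(1−ε)·(1/2))) = (σε/α)·ln(1/ε) via the mesh-generating function φ(t) = −ln(1−2(1−ε)t). Then for the mesh points x_i = 1 − (σε/α)φ(1 − i/N) with i = N/2,…,N, the element widths h_j = x_j − x_{j−1} satisfy h_{N/2+j} ≥ σε/(α(j+1)) for all j = 1,…,N/2. -/
open Real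

set_option maxHeartbeats 1000000

/-- Bakhvalov-type mesh lower bound `h_{N/2+j} ≥ σε/(α(j+1))`. -/
theorem bmesh_width_lower_bound
    (N : ℕ) (hN : 2 ≤ N) (hNeven : Even N)
    (ε α σ : ℝ) (hε : 0 < ε) (hεN : ε ≤ 1 / N) (hα : 0 < α) (hσ : 0 < σ)
    (φ : ℝ → ℝ) (hφ : ∀ t : ℝ, φ t = -Real.log (1 - 2 * (1 - ε) * t))
    (x : ℕ → ℝ)
    (hx : ∀ i : ℕ, N / 2 ≤ i → i ≤ N → x i = 1 - (σ * ε / α) * φ (1 - (i : ℝ) / N)) :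
    ∀ j : ℕ, 1 ≤ j → j ≤ N / 2 →
      x (N / 2 + j) - x (N / 2 + j - 1) ≥ σ * ε / (α * (j + 1)) := by
  intro j hj1 hjM
  obtain ⟨M, hM⟩ := hNeven
  have hM' : N = 2 * M := by omega
  have hhalf : N / 2 = M := by omega
  have hM1 : 1 ≤ M := by omega
  have hjM' : j ≤ M := by omega
  have hMR : (1:ℝ) ≤ (M:ℝ) := by exact_mod_cast hM1
  have hMR0 : (0:ℝ) < (M:ℝ) := by linarith
  have hNR : (N:ℝ) = 2 * M := by exact_mod_cast hM'
  have hNR0 : (0:ℝ) < (N:ℝ) := by rw [hNR]; linarith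
  have hεNmul : ε * N ≤ 1 := by
    have h := mul_le_mul_of_nonneg_right hεN (le_of_lt hNR0)
    rwa [one_div, inv_mul_cancel₀ (ne_of_gt hNR0)] at h
  have hεM1 : ε * ((M:ℝ) + 1) ≤ 1 := by nlinarith
  have hε1 : ε < 1 := by nlinarith
  have hjR : (1:ℝ) ≤ (j:ℝ) := by exact_mod_cast hj1
  set jR : ℝ := (j:ℝ) with hjRdef
  -- index values
  have hi1 : N / 2 ≤ N / 2 + j := by omega
  have hi2 : N / 2 + j ≤ N := by omega
  have hi1' : N / 2 ≤ N / 2 + j - 1 := by omega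
  have hi2' : N / 2 + j - 1 ≤ N := by omega
  have hx1 := hx (N / 2 + j) hi1 hi2
  have hx2 := hx (N / 2 + j - 1) hi1' hi2'
  have hc1 : ((N / 2 + j : ℕ) : ℝ) = (M:ℝ) + jR := by
    rw [hhalf]; push_cast; ring
  have hc2 : ((N / 2 + j - 1 : ℕ) : ℝ) = (M:ℝ) + jR - 1 := by
    have h : N / 2 + j - 1 = M + (j - 1) := by omega
    rw [h]; push_cast [Nat.cast_sub hj1]; ring
  rw [hc1] at hx1
  rw [hc2] at hx2
  rw [hφ] at hx1 hx2
  set a : ℝ := ε * M + (1 - ε) * jR with ha_def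
  set b : ℝ := ε * M + (1 - ε) * (jR - 1) with hb_def
  have hb0 : 0 < b := by
    have : 0 ≤ (1 - ε) * (jR - 1) := by nlinarith
    nlinarith
  have habd : a - b = 1 - ε := by rw [ha_def, hb_def]; ring
  have hab : b < a := by linarith
  have ha0 : 0 < a := lt_trans hb0 hab
  have hA1 : 1 - 2 * (1 - ε) * (1 - ((M:ℝ) + jR) / N) = a / M := by
    rw [hNR, ha_def]; field_simp; ring
  have hA2 : 1 - 2 * (1 - ε) * (1 - ((M:ℝ) + jR - 1) / N) = b / M := by
    rw [hNR, hb_def]; field_simp; ring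
  rw [hA1] at hx1
  rw [hA2] at hx2
  have hlog1 : Real.log (a / M) = Real.log a - Real.log M :=
    Real.log_div (ne_of_gt ha0) (ne_of_gt hMR0)
  have hlog2 : Real.log (b / M) = Real.log b - Real.log M :=
    Real.log_div (ne_of_gt hb0) (ne_of_gt hMR0)
  have hdiff : x (N / 2 + j) - x (N / 2 + j - 1)
      = (σ * ε / α) * (Real.log a - Real.log b) := by
    rw [hx1, hx2, hlog1, hlog2]; ring
  -- key inequality: log a - log b ≥ 1/(jR+1)
  have hba : 0 < b / a := div_pos hb0 ha0
  have hkey0 : Real.log (b / a) ≤ b / a - 1 := Real.log_le_sub_one_of_pos hba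
  have hlogba : Real.log (b / a) = Real.log b - Real.log a :=
    Real.log_div (ne_of_gt hb0) (ne_of_gt ha0)
  have hstep : (1 - ε) / a ≤ Real.log a - Real.log b := by
    rw [hlogba] at hkey0
    have h1 : 1 - b / a = (a - b) / a := by field_simp
    have : 1 - b / a ≤ Real.log a - Real.log b := by linarith
    rw [h1, habd] at this
    exact this
  have hj1R : (0:ℝ) < jR + 1 := by linarith
  have hkey : 1 / (jR + 1) ≤ Real.log a - Real.log b := by
    refine le_trans ?_ hstep
    rw [div_le_div_iff₀ hj1R ha0]
    have : a ≤ (1 - ε) * (jR + 1) := by rw [ha_def]; nlinarith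
    linarith
  have hcpos : 0 < σ * ε / α := by positivity
  have hfin : σ * ε / (α * (jR + 1)) = (σ * ε / α) * (1 / (jR + 1)) := by
    field_simp
  rw [ge_iff_le, hdiff]
  calc σ * ε / (α * (jR + 1)) = (σ * ε / α) * (1 / (jR + 1)) := hfin
    _ ≤ (σ * ε / α) * (Real.log a - Real.log b) := by
        exact mul_le_mul_of_nonneg_left hkey (le_of_lt hcpos)
end

section
/- Let ψ: [0,1/2] → (0,1] be continuously differentiable and decreasing with ψ = e^{−φ}, where φ is increasing with φ(0)=0. For the mesh x_j = 1 − (σε/α)φ(1 − j/N), j = N/2,…,N, with h_j = x_j − x_{j−1}, define 𝒢_j = min{h_j/ε, 1}·ψ(1 − j/N). Then ∑_{j=N/2+1}^{N} 𝒢_j ≤ (σ/α)·∑_{j=N/2+1}^{N} ∫_{1−j/N}^{1−(j−1)/N} |ψ'(t)|/ψ(t) dt · ψ(1−j/N) + 1, and in particular if |ψ'(t)|/ψ(t)·ψ(1−j/N) ≤ |ψ'(t)| on each subinterval (which holds since ψ is decreasing), then ∑_{j=N/2+1}^{N} 𝒢_j ≤ (σ/α)·(ψ(0) − ψ(1/2))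 + 1 ≤ σ/α + 1. -/
open Real Set Finset


lemma key_aux (c : ℝ) (hc : 0 < c) : 1 ≤ (c+1) * (1 - Real.exp (-(1/c))) := by
  have h1 : 1/c + 1 ≤ Real.exp (1/c) := Real.add_one_le_exp _
  have hm : Real.exp (-(1/c)) * Real.exp (1/c) = 1 := by
    rw [← Real.exp_add]; simp
  have hE : 0 < Real.exp (-(1/c)) := Real.exp_pos _
  have h2 : Real.exp (-(1/c)) * (1/c+1) ≤ 1 := by
    exact (mul_le_mul_of_nonneg_left h1 hE.le).trans_eq hm
  have h3 : Real.exp (-(1/c)) * (1/c+1) * c = Real.exp (-(1/c)) * (1 + c) := by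
    field_simp
  nlinarith [mul_le_mul_of_nonneg_right h2 hc.le, h3]

lemma key_min (c d : ℝ) (hc : 0 < c) (hd : 0 ≤ d) :
    min (c*d) 1 ≤ (c+1) * (1 - Real.exp (-d)) := by
  have haux := key_aux c hc
  rcases le_total (c*d) 1 with hcd | hcd
  · rw [min_eq_left hcd]
    have hcd0 : 0 ≤ c*d := by positivity
    have hconv := convexOn_exp.2 (Set.mem_univ (0:ℝ)) (Set.mem_univ (-(1/c)))
        (by linarith : (0:ℝ) ≤ 1 - c*d) hcd0 (by ring)
    have he : (1 - c*d) • (0:ℝ) + (c*d) • (-(1/c)) = -d := by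
      simp only [smul_eq_mul, mul_zero, zero_add, mul_neg, neg_inj]
      rw [mul_one_div, mul_comm c d, mul_div_assoc, div_self hc.ne', mul_one]
    rw [he] at hconv
    simp only [smul_eq_mul, Real.exp_zero, mul_one] at hconv
    nlinarith [mul_le_mul_of_nonneg_left haux hcd0,
      mul_le_mul_of_nonneg_left hconv (by linarith : (0:ℝ) ≤ c+1)]
  · rw [min_eq_right hcd]
    have h1c : 1/c ≤ d := by rw [div_le_iff₀ hc]; linarith [mul_comm c d]
    have h2 : Real.exp (-d) ≤ Real.exp (-(1/c)) := Real.exp_le_exp.2 (by linarith)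
    nlinarith [h2, haux, hc]

lemma key_exp (c x y : ℝ) (hc : 0 < c) (hy : 0 ≤ y) (hxy : y ≤ x) :
    min (c*(x-y)) 1 * Real.exp (-y) ≤ (c+1) * (Real.exp (-y) - Real.exp (-x)) := by
  have h1 := key_min c (x-y) hc (by linarith)
  have h2 : Real.exp (-x) = Real.exp (-y) * Real.exp (-(x-y)) := by
    rw [← Real.exp_add]; ring_nf
  have hE : 0 < Real.exp (-y) := Real.exp_pos _
  nlinarith [mul_le_mul_of_nonneg_right h1 hE.le]

lemma sum_telescope_Icc (f : ℕ → ℝ) (m n : ℕ) (hmn : m ≤ n) :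
    ∑ j ∈ Finset.Icc (m+1) n, (f j - f (j-1)) = f n - f m := by
  induction n with
  | zero => interval_cases m; simp
  | succ n ih =>
    rcases eq_or_lt_of_le hmn with rfl | h'
    · rw [Finset.Icc_eq_empty (by omega)]; simp
    · have hmn' : m ≤ n := Nat.lt_succ_iff.mp h'
      rw [Finset.sum_Icc_succ_top (Nat.succ_le_succ hmn'), ih hmn']
      simp

/-- Summability bound `∑ 𝒢_j ≤ σ/α + 1` for layer-adapted meshes. -/
theorem sum_G_bounded
    (N : ℕ) (hN : 2 ≤ N) (hNeven : Even N)
    (ε α σ : ℝ) (hε : 0 < ε) (hα : 0 < α) (hσ : 0 < σ)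
    (φ ψ : ℝ → ℝ) (hψC1 : ContDiff ℝ 1 ψ)
    (hψφ : ∀ t : ℝ, ψ t = Real.exp (-(φ t)))
    (hφ0 : φ 0 = 0)
    (hφmono : MonotoneOn φ (Set.Icc (0 : ℝ) (1 / 2)))
    (hψdec : AntitoneOn ψ (Set.Icc (0 : ℝ) (1 / 2)))
    (hψrange : ∀ t ∈ Set.Icc (0 : ℝ) (1 / 2), ψ t ∈ Set.Ioc (0 : ℝ) 1)
    (x : ℕ → ℝ)
    (hx : ∀ j : ℕ, N / 2 ≤ j → j ≤ N → x j = 1 - (σ * ε / α) * φ (1 - (j : ℝ) / N))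
    (h : ℕ → ℝ) (hh : ∀ j : ℕ, h j = x j - x (j - 1))
    (G : ℕ → ℝ)
    (hG : ∀ j : ℕ, G j = min (h j / ε) 1 * ψ (1 - (j : ℝ) / N)) :
    (∑ j ∈ Finset.Icc (N / 2 + 1) N, G j ≤
      (σ / α) * ∑ j ∈ Finset.Icc (N / 2 + 1) N,
        (∫ t in (1 - (j : ℝ) / N)..(1 - ((j : ℝ) - 1) / N), |deriv ψ t| / ψ t) *
          ψ (1 - (j : ℝ) / N) + 1) ∧
    (∑ j ∈ Finset.Icc (N / 2 + 1) N, G j ≤ (σ / α) * (ψ 0 - ψ (1 / 2)) + 1) ∧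
    (σ / α) * (ψ 0 - ψ (1 / 2)) + 1 ≤ σ / α + 1 := by
  obtain ⟨K, hK⟩ := hNeven
  have hN0 : (0:ℝ) < (N:ℝ) := by positivity
  have hc : 0 < σ / α := div_pos hσ hα
  have hψpos : ∀ t, 0 < ψ t := fun t => by rw [hψφ]; exact Real.exp_pos _
  have hψdiff : Differentiable ℝ ψ := hψC1.differentiable one_ne_zero
  have hφeq : φ = fun t => -Real.log (ψ t) := by
    funext t; rw [hψφ t, Real.log_exp]; ring
  have hφhas : ∀ t, HasDerivAt φ (-(deriv ψ t / ψ t)) t := by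
    intro t
    have h1 : HasDerivAt ψ (deriv ψ t) t := (hψdiff t).hasDerivAt
    have h2 := (h1.log (hψpos t).ne').neg
    rw [hφeq]; exact h2
  have hφdiff : ∀ t, DifferentiableAt ℝ φ t := fun t => (hφhas t).differentiableAt
  have hφderiv : ∀ t, deriv φ t = -(deriv ψ t / ψ t) := fun t => (hφhas t).deriv
  have hdψcont : Continuous (deriv ψ) := hψC1.continuous_deriv le_rfl
  have hcont1 : Continuous (deriv φ) := by
    have : deriv φ = fun t => -(deriv ψ t / ψ t) := funext hφderiv
    rw [this]
    exact (hdψcont.div hψdiff.continuous (fun t => (hψpos t).ne')).neg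
  have hcont2 : Continuous (fun t => |deriv ψ t| / ψ t) :=
    hdψcont.abs.div hψdiff.continuous (fun t => (hψpos t).ne')
  have hψ0 : ψ 0 = 1 := by rw [hψφ, hφ0]; simp
  -- per-term facts
  have key : ∀ j ∈ Finset.Icc (N/2+1) N,
      (G j ≤ (σ/α) * ((∫ t in (1 - (j:ℝ)/N)..(1 - ((j:ℝ)-1)/N), |deriv ψ t| / ψ t) *
          ψ (1 - (j:ℝ)/N)) ∧
       G j ≤ (σ/α + 1) * (ψ (1 - (j:ℝ)/N) - ψ (1 - ((j-1:ℕ):ℝ)/N))) := by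
    intro j hj
    obtain ⟨hj1, hj2⟩ := Finset.mem_Icc.mp hj
    have hcast : ((j-1:ℕ):ℝ) = (j:ℝ) - 1 := by
      have h1j : 1 ≤ j := by omega
      push_cast [h1j]; ring
    have hjN : (j:ℝ) ≤ (N:ℝ) := Nat.cast_le.2 hj2
    have h2j : (N:ℝ) + 2 ≤ 2*(j:ℝ) := by
      have : N + 2 ≤ 2*j := by omega
      exact_mod_cast this
    have htj : (1 - (j:ℝ)/N) ∈ Set.Icc (0:ℝ) (1/2) := by
      constructor
      · rw [sub_nonneg, div_le_one hN0]; exact hjN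
      · have : (1:ℝ)/2 ≤ (j:ℝ)/N := by
          rw [div_le_div_iff₀ (by norm_num) hN0]; linarith
        linarith
    have htj1 : (1 - ((j:ℝ)-1)/N) ∈ Set.Icc (0:ℝ) (1/2) := by
      constructor
      · rw [sub_nonneg, div_le_one hN0]; linarith
      · have : (1:ℝ)/2 ≤ ((j:ℝ)-1)/N := by
          rw [div_le_div_iff₀ (by norm_num) hN0]; linarith
        linarith
    have htle : (1 - (j:ℝ)/N) ≤ (1 - ((j:ℝ)-1)/N) := by
      have : ((j:ℝ)-1)/N ≤ (j:ℝ)/N :=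
        div_le_div_of_nonneg_right (by linarith) hN0.le
      linarith
    have hhj : h j / ε = σ/α * (φ (1 - ((j:ℝ)-1)/N) - φ (1 - (j:ℝ)/N)) := by
      rw [hh, hx j (by omega) hj2, hx (j-1) (by omega) (by omega), hcast]
      field_simp
      ring
    have hA0 : 0 ≤ φ (1 - (j:ℝ)/N) := by
      have := hφmono (Set.mem_Icc.mpr ⟨le_refl 0, by norm_num⟩) htj htj.1
      rw [hφ0] at this; exact this
    have hAB : φ (1 - (j:ℝ)/N) ≤ φ (1 - ((j:ℝ)-1)/N) := hφmono htj htj1 htle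
    constructor
    · -- integral bound
      have hint1 : ∫ t in (1 - (j:ℝ)/N)..(1 - ((j:ℝ)-1)/N), deriv φ t
          = φ (1 - ((j:ℝ)-1)/N) - φ (1 - (j:ℝ)/N) :=
        intervalIntegral.integral_deriv_eq_sub (fun t _ => hφdiff t)
          (hcont1.intervalIntegrable _ _)
      have hint2 : (∫ t in (1 - (j:ℝ)/N)..(1 - ((j:ℝ)-1)/N), deriv φ t)
          ≤ ∫ t in (1 - (j:ℝ)/N)..(1 - ((j:ℝ)-1)/N), |deriv ψ t| / ψ t := by
        apply intervalIntegral.integral_mono_on htle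
          (hcont1.intervalIntegrable _ _) (hcont2.intervalIntegrable _ _)
        intro t _
        have h1 : -(deriv ψ t / ψ t) = (-deriv ψ t) / ψ t := by ring
        rw [hφderiv t, h1]
        exact (div_le_div_iff_of_pos_right (hψpos t)).2 (neg_le_abs _)
      have hψj := (hψpos (1 - (j:ℝ)/N)).le
      have hmin : min (h j / ε) 1 ≤ h j / ε := min_le_left _ _
      rw [hG]
      calc min (h j / ε) 1 * ψ (1 - (j:ℝ)/N)
          ≤ (h j / ε) * ψ (1 - (j:ℝ)/N) := mul_le_mul_of_nonneg_right hmin hψj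
        _ = σ/α * ((φ (1 - ((j:ℝ)-1)/N) - φ (1 - (j:ℝ)/N)) * ψ (1 - (j:ℝ)/N)) := by
            rw [hhj]; ring
        _ ≤ σ/α * ((∫ t in (1 - (j:ℝ)/N)..(1 - ((j:ℝ)-1)/N), |deriv ψ t| / ψ t) *
              ψ (1 - (j:ℝ)/N)) := by
            apply mul_le_mul_of_nonneg_left _ hc.le
            apply mul_le_mul_of_nonneg_right _ hψj
            rw [← hint1]; exact hint2
    · -- exponential telescoping bound
      rw [hG, hhj, hcast, hψφ (1 - (j:ℝ)/N), hψφ (1 - ((j:ℝ)-1)/N)]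
      exact key_exp (σ/α) (φ (1 - ((j:ℝ)-1)/N)) (φ (1 - (j:ℝ)/N)) hc hA0 hAB
  have hNhalf : N/2 = K := by omega
  have hfN : (1 - (N:ℝ)/N) = 0 := by rw [div_self hN0.ne', sub_self]
  have hfK : (1 - ((N/2:ℕ):ℝ)/N) = 1/2 := by
    rw [hNhalf]
    have : (N:ℝ) = (K:ℝ) + (K:ℝ) := by exact_mod_cast hK
    have hK0 : (0:ℝ) < (K:ℝ) := by
      have : 1 ≤ K := by omega
      exact_mod_cast Nat.lt_of_lt_of_le Nat.zero_lt_one this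
    rw [this]; field_simp; ring
  have hsum2 : ∑ j ∈ Finset.Icc (N/2+1) N, G j ≤ (σ/α + 1) * (ψ 0 - ψ (1/2)) := by
    calc ∑ j ∈ Finset.Icc (N/2+1) N, G j
        ≤ ∑ j ∈ Finset.Icc (N/2+1) N,
            (σ/α + 1) * (ψ (1 - (j:ℝ)/N) - ψ (1 - ((j-1:ℕ):ℝ)/N)) :=
          Finset.sum_le_sum (fun j hj => (key j hj).2)
      _ = (σ/α + 1) * ∑ j ∈ Finset.Icc (N/2+1) N,
            ((fun i : ℕ => ψ (1 - (i:ℝ)/N)) j - (fun i : ℕ => ψ (1 - (i:ℝ)/N)) (j-1)) := by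
          rw [Finset.mul_sum]
      _ = (σ/α + 1) * (ψ (1 - (N:ℝ)/N) - ψ (1 - ((N/2:ℕ):ℝ)/N)) := by
          rw [sum_telescope_Icc (fun i : ℕ => ψ (1 - (i:ℝ)/N)) (N/2) N (by omega)]
      _ = (σ/α + 1) * (ψ 0 - ψ (1/2)) := by rw [hfN, hfK]
  have hψhalf := hψpos (1/2)
  have hψhalf2 : ψ (1/2) ≤ 1 := (hψrange (1/2) (by norm_num)).2
  refine ⟨?_, ?_, ?_⟩
  · calc ∑ j ∈ Finset.Icc (N/2+1) N, G j
        ≤ ∑ j ∈ Finset.Icc (N/2+1) N, (σ/α) *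
            ((∫ t in (1 - (j:ℝ)/N)..(1 - ((j:ℝ)-1)/N), |deriv ψ t| / ψ t) *
              ψ (1 - (j:ℝ)/N)) := Finset.sum_le_sum (fun j hj => (key j hj).1)
      _ = (σ/α) * ∑ j ∈ Finset.Icc (N/2+1) N,
            (∫ t in (1 - (j:ℝ)/N)..(1 - ((j:ℝ)-1)/N), |deriv ψ t| / ψ t) *
              ψ (1 - (j:ℝ)/N) := by rw [Finset.mul_sum]
      _ ≤ _ + 1 := by linarith
  · have : (σ/α + 1) * (ψ 0 - ψ (1/2)) ≤ (σ/α) * (ψ 0 - ψ (1/2)) + 1 := by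
      rw [hψ0]; nlinarith
    linarith
  · rw [hψ0]
    nlinarith [mul_nonneg hc.le hψhalf.le]
end

section
/- Let p_ε: [0,1] → ℝ satisfy |p_ε(x)| ≤ e^{−α(1−x)/ε} with α, ε > 0, and let 0 = x_0 < x_1 < ⋯ < x_{N/2} = 1−τ be a partition of [0,1−τ] with τ = (σε/α)ln N, N ≥ 2, σ ≥ 1. Then ∑_{j=1}^{N/2} [ ‖p_ε‖²_{L²(I_j)} + h_j·p_ε(x_{j−1})² ] ≤ C·ε·N^{−2σ} for a constant C depending only on α, where I_j = [x_{j−1},x_j] and h_j = x_j − x_{j−1}. -/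
open Real Set Finset intervalIntegral

/-- Coarse-region bound for `∑_j [‖p_ε‖²_{L²(I_j)} + h_j p_ε(x_{j-1})²] ≤ C ε N^{-2σ}`. -/
theorem coarse_region_projection_data_bound
    (α : ℝ) (hα : 0 < α) :
    ∃ C > 0, ∀ (ε σ τ : ℝ) (N : ℕ) (x : ℕ → ℝ) (p : ℝ → ℝ),
      0 < ε → 1 ≤ σ → 2 ≤ N →
      τ = (σ * ε / α) * Real.log N →
      x 0 = 0 → x (N / 2) = 1 - τ →
      (∀ i j : ℕ, i < j → j ≤ N / 2 → x i < x j) →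
      (∀ y ∈ Set.Icc (0 : ℝ) 1, |p y| ≤ Real.exp (-α * (1 - y) / ε)) →
      ∑ j ∈ Finset.Icc 1 (N / 2),
          ((∫ y in (x (j - 1))..(x j), (p y) ^ 2) + (x j - x (j - 1)) * (p (x (j - 1))) ^ 2)
        ≤ C * ε * (N : ℝ) ^ (-(2 * σ)) := by
  refine ⟨1/α, by positivity, ?_⟩
  intro ε σ τ N x p hε hσ hN hτ hx0 hxM hx hp
  set M := N / 2 with hMdef
  have hM : 1 ≤ M := by omega
  have hN1 : (1:ℝ) < (N:ℝ) := by exact_mod_cast Nat.lt_of_lt_of_le (by norm_num) hN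
  have hlogN : 0 < Real.log N := Real.log_pos hN1
  have hτ0 : 0 ≤ τ := by
    rw [hτ]; positivity
  have hτ1 : τ < 1 := by
    have := hx 0 M hM le_rfl
    rw [hx0, hxM] at this; linarith
  set c := 2*α/ε with hc
  have hc0 : 0 < c := by positivity
  set f : ℝ → ℝ := fun y => Real.exp (c * (y-1)) with hf
  have hfc : Continuous f := by fun_prop
  have hxmono : ∀ i j, i ≤ j → j ≤ M → x i ≤ x j := by
    intro i j hij hjM
    rcases hij.lt_or_eq with h | h
    · exact (hx i j h hjM).le
    · rw [h]
  -- key per-interval bound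
  have key : ∀ j ∈ Finset.Icc 1 M,
      (∫ y in (x (j - 1))..(x j), (p y) ^ 2) + (x j - x (j - 1)) * (p (x (j - 1))) ^ 2
        ≤ 2 * ∫ y in (x (j-1))..(x j), f y := by
    intro j hj
    simp only [Finset.mem_Icc] at hj
    obtain ⟨hj1, hjM⟩ := hj
    have hab : x (j-1) < x j := hx (j-1) j (by omega) hjM
    have ha0 : 0 ≤ x (j-1) := by
      rcases Nat.eq_zero_or_pos (j-1) with h | h
      · rw [h, hx0]
      · have := hx 0 (j-1) h (by omega); linarith [hx0 ▸ this]
    have hb1 : x j ≤ 1 := by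
      have : x j ≤ x M := hxmono j M hjM le_rfl
      rw [hxM] at this; linarith
    have hpt : ∀ y ∈ Set.Icc (x (j-1)) (x j), p y ^ 2 ≤ f y := by
      intro y hy
      have hy01 : y ∈ Set.Icc (0:ℝ) 1 := ⟨le_trans ha0 hy.1, le_trans hy.2 hb1⟩
      have h1 := hp y hy01
      have h2 : p y ^ 2 ≤ (Real.exp (-α * (1 - y) / ε)) ^ 2 := by
        have := sq_abs (p y)
        nlinarith [abs_nonneg (p y), Real.exp_pos (-α * (1 - y) / ε)]
      calc p y ^ 2 ≤ (Real.exp (-α * (1 - y) / ε)) ^ 2 := h2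
        _ = f y := by
            rw [hf, sq, ← Real.exp_add]
            congr 1
            rw [hc, ← add_div, div_mul_eq_mul_div, div_eq_div_iff hε.ne' hε.ne']
            ring
    have hfint : IntervalIntegrable f MeasureTheory.volume (x (j-1)) (x j) :=
      hfc.intervalIntegrable _ _
    have hI1 : (∫ y in (x (j - 1))..(x j), (p y) ^ 2) ≤ ∫ y in (x (j-1))..(x j), f y := by
      by_cases hint : IntervalIntegrable (fun y => p y ^ 2) MeasureTheory.volume (x (j-1)) (x j)
      · exact intervalIntegral.integral_mono_on hab.le hint hfint hpt
      · rw [intervalIntegral.integral_undef hint]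
        exact intervalIntegral.integral_nonneg hab.le (fun y _ => (Real.exp_pos _).le)
    have hI2 : (x j - x (j - 1)) * (p (x (j - 1))) ^ 2 ≤ ∫ y in (x (j-1))..(x j), f y := by
      have h1 : p (x (j-1)) ^ 2 ≤ f (x (j-1)) := hpt _ ⟨le_rfl, hab.le⟩
      have h2 : (x j - x (j-1)) * f (x (j-1)) ≤ ∫ y in (x (j-1))..(x j), f y := by
        have : (∫ _y in (x (j-1))..(x j), f (x (j-1))) ≤ ∫ y in (x (j-1))..(x j), f y := by
          apply intervalIntegral.integral_mono_on hab.le (intervalIntegrable_const) hfint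
          intro y hy
          rw [hf]
          exact Real.exp_le_exp.mpr (by nlinarith [hy.1])
        simpa using this
      calc (x j - x (j - 1)) * (p (x (j - 1))) ^ 2
          ≤ (x j - x (j-1)) * f (x (j-1)) := by nlinarith
        _ ≤ _ := h2
    linarith
  have hsum := Finset.sum_le_sum key
  -- telescope
  have htel : ∑ j ∈ Finset.Icc 1 M, (∫ y in (x (j-1))..(x j), f y)
      = ∫ y in (x 0)..(x M), f y := by
    have hIcc : Finset.Icc 1 M = Finset.Ico 1 (M+1) := by
      rw [Finset.Ico_add_one_right_eq_Icc]
    rw [hIcc, Finset.sum_Ico_eq_sum_range]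
    have : ∀ i ∈ Finset.range (M + 1 - 1), (∫ y in (x (1 + i - 1))..(x (1 + i)), f y)
        = ∫ y in (x i)..(x (i+1)), f y := by
      intro i _
      have h1 : 1 + i - 1 = i := by omega
      have h2 : 1 + i = i + 1 := by omega
      rw [h1, h2]
    rw [Finset.sum_congr rfl this]
    have hM1 : M + 1 - 1 = M := by omega
    rw [hM1]
    exact intervalIntegral.sum_integral_adjacent_intervals
      (fun i _ => hfc.intervalIntegrable _ _)
  -- compute the integral
  have hderiv : ∀ y ∈ Set.uIcc (x 0) (x M), HasDerivAt (fun y => c⁻¹ * Real.exp (c*(y-1))) (f y) y := by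
    intro y _
    have h1 : HasDerivAt (fun y : ℝ => c*(y-1)) c y := by
      simpa using ((hasDerivAt_id y).sub_const 1).const_mul c
    have h2 := (Real.hasDerivAt_exp (c*(y-1))).comp y h1
    have h3 := h2.const_mul c⁻¹
    have h4 : c⁻¹ * (Real.exp (c*(y-1)) * c) = f y := by
      rw [hf]
      field_simp
    rw [← h4]; exact h3
  have hcalc : (∫ y in (x 0)..(x M), f y)
      = c⁻¹ * Real.exp (c*((1-τ)-1)) - c⁻¹ * Real.exp (c*((0:ℝ)-1)) := by
    rw [intervalIntegral.integral_eq_sub_of_hasDerivAt hderiv (hfc.intervalIntegrable _ _),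
      hx0, hxM]
  have hbound : (∫ y in (x 0)..(x M), f y) ≤ c⁻¹ * Real.exp (-c*τ) := by
    rw [hcalc]
    have : Real.exp (c*((1-τ)-1)) = Real.exp (-c*τ) := by ring_nf
    rw [this]
    have h0 : 0 ≤ c⁻¹ * Real.exp (c*((0:ℝ)-1)) := by positivity
    linarith
  have hexp : Real.exp (-c*τ) = (N : ℝ) ^ (-(2 * σ)) := by
    rw [Real.rpow_def_of_pos (by linarith : (0:ℝ) < (N:ℝ))]
    congr 1
    rw [hτ, hc]
    field_simp
  have hfinal : 2 * (∫ y in (x 0)..(x M), f y) ≤ (1/α) * ε * (N : ℝ) ^ (-(2 * σ)) := by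
    have h1 : c⁻¹ = ε / (2*α) := by rw [hc]; field_simp
    have h2 : (∫ y in (x 0)..(x M), f y) ≤ (ε/(2*α)) * (N : ℝ) ^ (-(2 * σ)) := by
      rw [← h1, ← hexp]; exact hbound
    have heq : (1/α) * ε * ((N:ℝ) ^ (-(2 * σ))) = 2 * ((ε/(2*α)) * ((N:ℝ) ^ (-(2 * σ)))) := by
      field_simp
    rw [heq]
    linarith
  calc ∑ j ∈ Finset.Icc 1 M,
          ((∫ y in (x (j - 1))..(x j), (p y) ^ 2) + (x j - x (j - 1)) * (p (x (j - 1))) ^ 2)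
      ≤ ∑ j ∈ Finset.Icc 1 M, 2 * ∫ y in (x (j-1))..(x j), f y := hsum
    _ = 2 * ∫ y in (x 0)..(x M), f y := by rw [← Finset.mul_sum, htel]
    _ ≤ (1/α) * ε * (N : ℝ) ^ (-(2 * σ)) := hfinal
end
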